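/- SDCA convergence for smooth losses (Theorem 2, first part): Assume each φ_i is (1/γ)-smooth and convex (γ > 0), together with the standing assumptions, and run the SDCA process with α^(0) = 0. Let ε_P > 0. If T ≥ (n + 1/(λγ)) · log((n + 1/(λγ)) / ε_P), then E[P(w^(T)) − D(α^(T))] ≤ ε_P. -/

import Mathlib

open scoped BigOperators RealInnerProductSpace
open Finset

/-- The convex conjugate `φ*(u) = sup_z (z*u - φ z)` (as a real number; junk value
when the supremum is not finite). -/
noncomputable def fconj (φ : ℝ → ℝ) (u : ℝ) : ℝ := ⨆ z : ℝ, (z * u - φ z)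

/-- `φ*(u) < ∞`, i.e. the defining supremum of the conjugate is finite. -/
def FiniteConj (φ : ℝ → ℝ) (u : ℝ) : Prop :=
  BddAbove (Set.range fun z => z * u - φ z)

/-- `g ∈ ∂φ(a)`: `g` is a subgradient of `φ` at `a`. -/
def IsSubgrad (φ : ℝ → ℝ) (a g : ℝ) : Prop :=
  ∀ b, φ a + g * (b - a) ≤ φ b

/-- `u ∈ ∂φ*(b)`: `u` is a subgradient of the conjugate `φ*` at `b`
(the subgradient inequality being required at all points where `φ*` is finite). -/
def ConjSubgrad (φ : ℝ → ℝ) (b u : ℝ) : Prop :=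
  FiniteConj φ b ∧ ∀ v, FiniteConj φ v → fconj φ b + u * (v - b) ≤ fconj φ v

/-- Dual feasibility: `φ_i*(-α_i) < ∞` for all `i`. -/
def Feas {n : ℕ} (φ : Fin n → ℝ → ℝ) (α : Fin n → ℝ) : Prop :=
  ∀ i, FiniteConj (φ i) (-(α i))

/-- `w(α) = (1/(λ n)) ∑ι α_i x_i`. -/
noncomputable def wvec {n d : ℕ} (lam : ℝ) (x : Fin n → EuclideanSpace ℝ (Fin d))
    (α : Fin n → ℝ) : EuclideanSpace ℝ (Fin d) :=
  (1 / (lam * (n : ℝ))) • ∑ i, α i • x i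

/-- The primal objective `P(w)`. -/
noncomputable def primalObj {n d : ℕ} (lam : ℝ) (x : Fin n → EuclideanSpace ℝ (Fin d))
    (φ : Fin n → ℝ → ℝ) (w : EuclideanSpace ℝ (Fin d)) : ℝ :=
  (1 / (n : ℝ)) * ∑ i, φ i ⟪x i, w⟫ + lam / 2 * ‖w‖ ^ 2

/-- The dual objective `D(α)`. -/
noncomputable def dualObj {n d : ℕ} (lam : ℝ) (x : Fin n → EuclideanSpace ℝ (Fin d))
    (φ : Fin n → ℝ → ℝ) (α : Fin n → ℝ) : ℝ :=
  (1 / (n : ℝ)) * ∑ i, -(fconj (φ i) (-(α i))) - lam / 2 * ‖wvec lam x α‖ ^ 2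

/-- The SDCA trajectory: `α^(0) = α0`, `α^(t+1) = step α^(t) (idx t)`. -/
noncomputable def traj {n : ℕ} (step : (Fin n → ℝ) → Fin n → (Fin n → ℝ))
    (α0 : Fin n → ℝ) (idx : ℕ → Fin n) : ℕ → (Fin n → ℝ)
  | 0 => α0
  | t + 1 => step (traj step α0 idx t) (idx t)

/-- Expectation over the first `t` coordinates of a uniformly random i.i.d. index
sequence, applied to a function `g` of the index sequence (which should depend
only on the first `t` indices). -/
noncomputable def ExpIdx {n : ℕ} (hn : 0 < n) (t : ℕ) (g : (ℕ → Fin n) → ℝ) : ℝ :=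
  (∑ idx : Fin t → Fin n,
      g (fun k => if h : k < t then idx ⟨k, h⟩ else (⟨0, hn⟩ : Fin n))) / (n : ℝ) ^ t


set_option maxHeartbeats 1000000

lemma le_fconj {φ : ℝ → ℝ} {u : ℝ} (h : FiniteConj φ u) (z : ℝ) :
    z * u - φ z ≤ fconj φ u := le_ciSup h z

lemma fconj_le {φ : ℝ → ℝ} {u B : ℝ} (h : ∀ z, z * u - φ z ≤ B) : fconj φ u ≤ B :=
  ciSup_le h

lemma finiteConj_of_bound {φ : ℝ → ℝ} {u B : ℝ} (h : ∀ z, z * u - φ z ≤ B) :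
    FiniteConj φ u := ⟨B, by rintro y ⟨z, rfl⟩; exact h z⟩

/-- The derivative of a function with (1/γ)-Lipschitz derivative is Lipschitz-continuous. -/
lemma deriv_cont {φ : ℝ → ℝ} {γ : ℝ} (hγ : 0 < γ)
    (hder : ∀ a b : ℝ, |deriv φ a - deriv φ b| ≤ (1 / γ) * |a - b|) :
    Continuous (deriv φ) := by
  have : LipschitzWith (Real.toNNReal (1/γ)) (deriv φ) := by
    apply LipschitzWith.of_dist_le_mul
    intro a b
    rw [Real.dist_eq, Real.dist_eq, Real.coe_toNNReal _ (by positivity : (0:ℝ) ≤ 1/γ)]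
    exact hder a b
  exact this.continuous

/-- Descent lemma. -/
lemma descent {φ : ℝ → ℝ} {γ : ℝ} (hγ : 0 < γ) (hd : Differentiable ℝ φ)
    (hder : ∀ a b : ℝ, |deriv φ a - deriv φ b| ≤ (1 / γ) * |a - b|) (x y : ℝ) :
    φ y ≤ φ x + deriv φ x * (y - x) + (1 / (2 * γ)) * (y - x) ^ 2 := by
  have hc : Continuous (deriv φ) := deriv_cont hγ hder
  have key : ∀ p q : ℝ, p ≤ q →
      φ q ≤ φ p + deriv φ p * (q - p) + (1 / (2 * γ)) * (q - p) ^ 2 := by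
    intro p q hpq
    have hint : ∫ t in p..q, deriv φ t = φ q - φ p := by
      exact intervalIntegral.integral_deriv_eq_sub (fun t _ => hd t)
        (hc.intervalIntegrable p q)
    have h2 : ∫ t in p..q, (deriv φ t - deriv φ p) = φ q - φ p - deriv φ p * (q - p) := by
      rw [intervalIntegral.integral_sub (hc.intervalIntegrable p q)
        (intervalIntegrable_const), hint, intervalIntegral.integral_const, smul_eq_mul]
      ring
    have h3 : (∫ t in p..q, (deriv φ t - deriv φ p)) ≤ ∫ t in p..q, (t - p) / γ := by
      apply intervalIntegral.integral_mono_on hpq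
      · exact (hc.sub continuous_const).intervalIntegrable p q
      · exact ((continuous_id.sub continuous_const).div_const γ).intervalIntegrable p q
      · intro t ht
        have := hder t p
        have h4 : deriv φ t - deriv φ p ≤ |deriv φ t - deriv φ p| := le_abs_self _
        have h5 : |t - p| = t - p := abs_of_nonneg (by linarith [ht.1])
        rw [h5] at this
        calc deriv φ t - deriv φ p ≤ (1/γ) * (t - p) := h4.trans this
          _ = (t - p)/γ := by ring
    have h6 : (∫ t in p..q, (t - p) / γ) = (q - p)^2 / (2 * γ) := by
      have : (∫ t in p..q, (t - p) / γ) = (∫ t in p..q, (t - p)) / γ := by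
        simp [intervalIntegral.integral_div]
      rw [this]
      have e2 : (∫ t in p..q, (t - p)) = (q - p)^2/2 := by
        have := intervalIntegral.integral_comp_sub_right (a := p) (b := q) (fun u => u) p
        rw [this, integral_id]
        ring
      rw [e2]; ring
    have e : (q-p)^2/(2*γ) = 1/(2*γ)*(q-p)^2 := by ring
    linarith [h2 ▸ h3.trans_eq h6]
  rcases le_total x y with h | h
  · exact key x y h
  · -- y ≤ x : use integral from y to x reversed... do symmetric argument
    have hint : ∫ t in y..x, deriv φ t = φ x - φ y := by
      exact intervalIntegral.integral_deriv_eq_sub (fun t _ => hd t)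
        (hc.intervalIntegrable y x)
    have h2 : ∫ t in y..x, (deriv φ x - deriv φ t) = deriv φ x * (x - y) - (φ x - φ y) := by
      rw [intervalIntegral.integral_sub intervalIntegrable_const
        (hc.intervalIntegrable y x), hint, intervalIntegral.integral_const, smul_eq_mul]
      ring
    have h3 : (∫ t in y..x, (deriv φ x - deriv φ t)) ≤ ∫ t in y..x, (x - t) / γ := by
      apply intervalIntegral.integral_mono_on h
      · exact (continuous_const.sub hc).intervalIntegrable y x
      · exact ((continuous_const.sub continuous_id).div_const γ).intervalIntegrable y x
      · intro t ht
        have := hder x t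
        have h4 : deriv φ x - deriv φ t ≤ |deriv φ x - deriv φ t| := le_abs_self _
        have h5 : |x - t| = x - t := abs_of_nonneg (by linarith [ht.2])
        rw [h5] at this
        calc deriv φ x - deriv φ t ≤ (1/γ) * (x - t) := h4.trans this
          _ = (x - t)/γ := by ring
    have h6 : (∫ t in y..x, (x - t) / γ) = (x - y)^2 / (2 * γ) := by
      have e1 : (∫ t in y..x, (x - t) / γ) = (∫ t in y..x, (x - t)) / γ := by
        simp [intervalIntegral.integral_div]
      rw [e1]
      have e2 : (∫ t in y..x, (x - t)) = (x - y)^2/2 := by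
        have h0 : ∀ t : ℝ, x - t = -(t - x) := fun t => by ring
        simp only [h0]
        have := intervalIntegral.integral_comp_sub_right (a := y) (b := x) (fun u => -u) x
        rw [this, intervalIntegral.integral_neg, integral_id]
        ring
      rw [e2]; ring
    have e : (x-y)^2/(2*γ) = 1/(2*γ)*(y-x)^2 := by ring
    linarith [h2 ▸ h3.trans_eq h6]

/-- Subgradient inequality for a differentiable convex function. -/
lemma subgrad_ineq {φ : ℝ → ℝ} (hc : ConvexOn ℝ Set.univ φ) (hd : Differentiable ℝ φ)
    (a b : ℝ) : φ a + deriv φ a * (b - a) ≤ φ b := by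
  rcases lt_trichotomy a b with h | h | h
  · have := hc.deriv_le_slope (Set.mem_univ a) (Set.mem_univ b) h (hd a)
    rw [slope_def_field] at this
    have hba : 0 < b - a := by linarith
    rw [le_div_iff₀ hba] at this
    nlinarith
  · simp [h]
  · have := hc.slope_le_deriv (Set.mem_univ b) (Set.mem_univ a) h (hd a)
    rw [slope_def_field] at this
    have hba : 0 < a - b := by linarith
    rw [div_le_iff₀ (by linarith : (0:ℝ) < a - b)] at this
    nlinarith

/-- Fenchel–Young equality at the derivative. -/
lemma fconj_deriv {φ : ℝ → ℝ} (hc : ConvexOn ℝ Set.univ φ) (hd : Differentiable ℝ φ)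
    (a : ℝ) : FiniteConj φ (deriv φ a) ∧ fconj φ (deriv φ a) = a * deriv φ a - φ a := by
  have hb : ∀ z, z * deriv φ a - φ z ≤ a * deriv φ a - φ a := by
    intro z
    have := subgrad_ineq hc hd a z
    nlinarith
  refine ⟨finiteConj_of_bound hb, le_antisymm (fconj_le hb) (le_fconj (finiteConj_of_bound hb) a)⟩

/-- γ-strong convexity of the conjugate of a (1/γ)-smooth function. -/
lemma fconj_combo {φ : ℝ → ℝ} {γ : ℝ} (hγ : 0 < γ) (hd : Differentiable ℝ φ)
    (hder : ∀ a b : ℝ, |deriv φ a - deriv φ b| ≤ (1 / γ) * |a - b|)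
    {u v s : ℝ} (hu : FiniteConj φ u) (hv : FiniteConj φ v) (hs0 : 0 ≤ s) (hs1 : s ≤ 1) :
    FiniteConj φ (s * u + (1 - s) * v) ∧
      fconj φ (s * u + (1 - s) * v) ≤
        s * fconj φ u + (1 - s) * fconj φ v - γ / 2 * (s * (1 - s) * (u - v) ^ 2) := by
  have hs1' : (0:ℝ) ≤ 1 - s := by linarith
  have key : ∀ z, z * (s * u + (1 - s) * v) - φ z ≤
      s * fconj φ u + (1 - s) * fconj φ v - γ / 2 * (s * (1 - s) * (u - v) ^ 2) := by
    intro z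
    have A : (z + (1 - s) * γ * (u - v)) * u - φ (z + (1 - s) * γ * (u - v)) ≤ fconj φ u :=
      le_fconj hu _
    have B : (z - s * γ * (u - v)) * v - φ (z - s * γ * (u - v)) ≤ fconj φ v :=
      le_fconj hv _
    have d1 : φ (z + (1 - s) * γ * (u - v)) ≤ φ z + deriv φ z * ((1 - s) * γ * (u - v))
        + γ / 2 * ((1 - s) * (u - v)) ^ 2 := by
      have h := descent hγ hd hder z (z + (1 - s) * γ * (u - v))
      have e : φ z + deriv φ z * (z + (1 - s) * γ * (u - v) - z)
          + 1 / (2 * γ) * (z + (1 - s) * γ * (u - v) - z) ^ 2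
          = φ z + deriv φ z * ((1 - s) * γ * (u - v)) + γ / 2 * ((1 - s) * (u - v)) ^ 2 := by
        field_simp; ring
      linarith [h.trans_eq e]
    have d2 : φ (z - s * γ * (u - v)) ≤ φ z + deriv φ z * (-(s * γ * (u - v)))
        + γ / 2 * (s * (u - v)) ^ 2 := by
      have h := descent hγ hd hder z (z - s * γ * (u - v))
      have e : φ z + deriv φ z * (z - s * γ * (u - v) - z)
          + 1 / (2 * γ) * (z - s * γ * (u - v) - z) ^ 2
          = φ z + deriv φ z * (-(s * γ * (u - v))) + γ / 2 * (s * (u - v)) ^ 2 := by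
        field_simp; ring
      linarith [h.trans_eq e]
    nlinarith [mul_le_mul_of_nonneg_left A hs0, mul_le_mul_of_nonneg_left B hs1',
      mul_le_mul_of_nonneg_left d1 hs0, mul_le_mul_of_nonneg_left d2 hs1']
  exact ⟨finiteConj_of_bound key, fconj_le key⟩

section
variable {n d : ℕ} (x : Fin n → EuclideanSpace ℝ (Fin d)) (lam : ℝ)

lemma sum_smul_eq (hn : 0 < n) (hlam : 0 < lam) (α : Fin n → ℝ) :
    (∑ i, α i • x i) = (lam * n) • wvec lam x α := by
  rw [wvec, smul_smul]
  have hln : lam * (n:ℝ) ≠ 0 := by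
    have : (0:ℝ) < n := by exact_mod_cast hn
    positivity
  rw [mul_one_div, div_self hln, one_smul]

lemma sum_inner_eq (hn : 0 < n) (hlam : 0 < lam) (α : Fin n → ℝ)
    (w : EuclideanSpace ℝ (Fin d)) :
    ∑ i, α i * ⟪x i, w⟫ = lam * n * ⟪wvec lam x α, w⟫ := by
  have h1 : ∑ i, α i * ⟪x i, w⟫ = ⟪∑ i, α i • x i, w⟫ := by
    rw [sum_inner]
    simp [real_inner_smul_left, Finset.mul_sum, mul_assoc]
  rw [h1, sum_smul_eq x lam hn hlam α, real_inner_smul_left]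

lemma update_smul_sum (α : Fin n → ℝ) (i : Fin n) (c : ℝ) :
    (∑ j, Function.update α i c j • x j) = (∑ j, α j • x j) + (c - α i) • x i := by
  have h : ∀ j : Fin n, Function.update α i c j • x j
      = α j • x j + (if j = i then (c - α i) • x i else 0) := by
    intro j
    rcases eq_or_ne j i with rfl | h
    · simp [Function.update_self, sub_smul]
    · simp [Function.update_of_ne h, h]
  rw [Finset.sum_congr rfl fun j _ => h j, Finset.sum_add_distrib,
    Finset.sum_ite_eq' Finset.univ i fun _ => (c - α i) • x i]
  simp

lemma wvec_update (hn : 0 < n) (hlam : 0 < lam) (α : Fin n → ℝ) (i : Fin n) (c : ℝ) :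
    wvec lam x (Function.update α i c)
      = wvec lam x α + ((c - α i) / (lam * n)) • x i := by
  rw [wvec, wvec, update_smul_sum, smul_add, smul_smul]
  congr 2
  field_simp

lemma norm_add_smul_sq (w xi : EuclideanSpace ℝ (Fin d)) (r : ℝ) :
    ‖w + r • xi‖ ^ 2 = ‖w‖ ^ 2 + 2 * r * ⟪xi, w⟫ + r ^ 2 * ‖xi‖ ^ 2 := by
  rw [← real_inner_self_eq_norm_sq, ← real_inner_self_eq_norm_sq, ← real_inner_self_eq_norm_sq]
  simp only [inner_add_add_self, real_inner_smul_left, real_inner_smul_right]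
  rw [real_inner_comm xi w]
  ring

lemma dual_update (hn : 0 < n) (hlam : 0 < lam)
    (φ : Fin n → ℝ → ℝ) (α : Fin n → ℝ) (i : Fin n) (c : ℝ) :
    dualObj lam x φ (Function.update α i c) = dualObj lam x φ α
      + (1 / (n:ℝ)) * (-(fconj (φ i) (-c)) + fconj (φ i) (-(α i))
        - (c - α i) * ⟪x i, wvec lam x α⟫
        - (c - α i)^2 * ‖x i‖^2 / (2 * lam * n)) := by
  have hn' : (0:ℝ) < n := by exact_mod_cast hn
  have hsum : (∑ j, -(fconj (φ j) (-(Function.update α i c j))))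
      = (∑ j, -(fconj (φ j) (-(α j)))) + (-(fconj (φ i) (-c)) + fconj (φ i) (-(α i))) := by
    have h : ∀ j : Fin n, -(fconj (φ j) (-(Function.update α i c j)))
        = -(fconj (φ j) (-(α j)))
          + (if j = i then -(fconj (φ i) (-c)) + fconj (φ i) (-(α i)) else 0) := by
      intro j
      rcases eq_or_ne j i with rfl | h
      · simp [Function.update_self]
      · simp [Function.update_of_ne h, h]
    rw [Finset.sum_congr rfl fun j _ => h j, Finset.sum_add_distrib,
      Finset.sum_ite_eq' Finset.univ i]
    simp
  rw [dualObj, dualObj, hsum, wvec_update x lam hn hlam α i c, norm_add_smul_sq]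
  field_simp
  ring
end

section
variable {n d : ℕ} (x : Fin n → EuclideanSpace ℝ (Fin d)) (lam γ : ℝ)
  (φ : Fin n → ℝ → ℝ)

/-- Weak duality. -/
lemma weak_duality (hn : 0 < n) (hlam : 0 < lam) (α : Fin n → ℝ) (hα : Feas φ α)
    (w : EuclideanSpace ℝ (Fin d)) :
    dualObj lam x φ α ≤ primalObj lam x φ w := by
  have hn' : (0:ℝ) < n := by exact_mod_cast hn
  have h1 : ∀ i, -(fconj (φ i) (-(α i))) ≤ φ i ⟪x i, w⟫ + α i * ⟪x i, w⟫ := by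
    intro i
    have := le_fconj (hα i) ⟪x i, w⟫
    nlinarith [this]
  have h2 : (∑ i, -(fconj (φ i) (-(α i)))) ≤ ∑ i, (φ i ⟪x i, w⟫ + α i * ⟪x i, w⟫) :=
    Finset.sum_le_sum fun i _ => h1 i
  rw [Finset.sum_add_distrib, sum_inner_eq x lam hn hlam] at h2
  have h3 : lam * n * ⟪wvec lam x α, w⟫
      ≤ lam * n * (‖wvec lam x α‖^2 / 2 + ‖w‖^2 / 2) := by
    have hc := real_inner_le_norm (wvec lam x α) w
    have habs : ‖wvec lam x α‖ * ‖w‖ ≤ ‖wvec lam x α‖^2/2 + ‖w‖^2/2 := by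
      nlinarith [sq_nonneg (‖wvec lam x α‖ - ‖w‖)]
    have := hc.trans habs
    nlinarith [this, mul_pos hlam hn']
  have h4 : (∑ i, -(fconj (φ i) (-(α i))))
      ≤ (∑ i, φ i ⟪x i, w⟫) + lam * n * (‖wvec lam x α‖^2/2 + ‖w‖^2/2) := by linarith
  have h5 := mul_le_mul_of_nonneg_left h4 (le_of_lt (one_div_pos.mpr hn'))
  rw [dualObj, primalObj]
  have e : 1/(n:ℝ) * ((∑ i, φ i ⟪x i, w⟫) + lam * n * (‖wvec lam x α‖^2/2 + ‖w‖^2/2))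
      = 1/(n:ℝ) * (∑ i, φ i ⟪x i, w⟫) + lam/2 * ‖wvec lam x α‖^2 + lam/2 * ‖w‖^2 := by
    field_simp
    ring
  rw [e] at h5
  linarith

/-- The duality gap formula. -/
lemma gap_formula (hn : 0 < n) (hlam : 0 < lam) (α : Fin n → ℝ) :
    (1 / (n:ℝ)) * ∑ i, (φ i ⟪x i, wvec lam x α⟫ + fconj (φ i) (-(α i))
        + α i * ⟪x i, wvec lam x α⟫)
      = primalObj lam x φ (wvec lam x α) - dualObj lam x φ α := by
  have hn' : (0:ℝ) < n := by exact_mod_cast hn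
  have hs : ∑ i, α i * ⟪x i, wvec lam x α⟫ = lam * n * ‖wvec lam x α‖^2 := by
    rw [sum_inner_eq x lam hn hlam, real_inner_self_eq_norm_sq]
  rw [primalObj, dualObj, Finset.sum_add_distrib, Finset.sum_add_distrib, hs]
  have : (∑ i, -(fconj (φ i) (-(α i)))) = -∑ i, fconj (φ i) (-(α i)) := by
    rw [Finset.sum_neg_distrib]
  rw [this]
  field_simp
  ring

/-- Per-coordinate improvement. -/
lemma coord_improve (hn : 0 < n) (hlam : 0 < lam) (hγ : 0 < γ)
    (hconv : ∀ i, ConvexOn ℝ Set.univ (φ i))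
    (hdiff : ∀ i, Differentiable ℝ (φ i))
    (hder : ∀ i, ∀ a b : ℝ, |deriv (φ i) a - deriv (φ i) b| ≤ (1 / γ) * |a - b|)
    (hx : ∀ i, ‖x i‖ ≤ 1)
    (α : Fin n → ℝ) (hα : Feas φ α) (i : Fin n) :
    ∃ c : ℝ, Feas φ (Function.update α i c) ∧
      dualObj lam x φ α + (lam * γ / (1 + lam * γ * n)) *
          (φ i ⟪x i, wvec lam x α⟫ + fconj (φ i) (-(α i))
            + α i * ⟪x i, wvec lam x α⟫)
        ≤ dualObj lam x φ (Function.update α i c) := by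
  have hn' : (0:ℝ) < n := by exact_mod_cast hn
  set L : ℝ := lam * γ * n with hL
  have hL0 : 0 < L := by positivity
  have hL1 : 0 < 1 + L := by linarith
  set s : ℝ := L / (1 + L) with hsdef
  have hs0 : 0 ≤ s := by positivity
  have hs1 : s ≤ 1 := by
    rw [hsdef, div_le_one hL1]; linarith
  set a : ℝ := ⟪x i, wvec lam x α⟫ with ha
  set u : ℝ := deriv (φ i) a with hu
  set c : ℝ := (1 - s) * α i - s * u with hc
  have hfu : FiniteConj (φ i) u ∧ fconj (φ i) u = a * u - φ i a := fconj_deriv (hconv i) (hdiff i) a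
  have hcombo := fconj_combo hγ (hdiff i) (hder i) hfu.1 (hα i) hs0 hs1
  have hcc : -c = s * u + (1 - s) * (-(α i)) := by rw [hc]; ring
  refine ⟨c, ?_, ?_⟩
  · intro j
    rcases eq_or_ne j i with rfl | hji
    · rw [Function.update_self, hcc]; exact hcombo.1
    · rw [Function.update_of_ne hji]; exact hα j
  · rw [dual_update x lam hn hlam φ α i c]
    have hfc : fconj (φ i) (-c) ≤ s * (a * u - φ i a) + (1 - s) * fconj (φ i) (-(α i))
        - γ / 2 * (s * (1 - s) * (u - (-(α i))) ^ 2) := by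
      rw [hcc]; rw [← hfu.2]; exact hcombo.2
    have hca : c - α i = -(s * (u + α i)) := by rw [hc]; ring
    set F : ℝ := fconj (φ i) (-(α i)) with hF
    set T : ℝ := (u + α i)^2 with hT
    have hT0 : 0 ≤ T := by rw [hT]; positivity
    -- key coefficient identity : γ/2 * s * (1-s) = s^2/(2*lam*n)
    have hco : γ / 2 * (s * (1 - s)) = s^2 / (2 * lam * n) := by
      rw [hsdef, hL]
      field_simp
      ring
    have hxx : (c - α i)^2 * ‖x i‖^2 / (2 * lam * n) ≤ s^2 * T / (2 * lam * n) := by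
      rw [hca]
      have h1 : (-(s * (u + α i)))^2 = s^2 * T := by rw [hT]; ring
      rw [h1]
      have hnorm : ‖x i‖^2 ≤ 1 := by
        have := hx i
        nlinarith [norm_nonneg (x i)]
      have : s^2 * T * ‖x i‖^2 ≤ s^2 * T * 1 := by
        apply mul_le_mul_of_nonneg_left hnorm
        positivity
      have hpos : (0:ℝ) < 2 * lam * n := by positivity
      rw [div_le_div_iff₀ hpos hpos]
      nlinarith [this]
    have hq : (u - (-(α i)))^2 = T := by rw [hT]; ring
    rw [hq] at hfc
    have hsn : lam * γ / (1 + lam * γ * n) = s / n := by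
      rw [hsdef, hL]
      field_simp
    rw [hsn]
    have hco' : γ / 2 * (s * (1 - s) * T) = s^2 / (2 * lam * n) * T := by
      rw [show γ / 2 * (s * (1 - s) * T) = γ / 2 * (s * (1 - s)) * T by ring, hco]
    have hxx' : s^2 * T / (2 * lam * n) = s^2 / (2 * lam * n) * T := by ring
    have key : s * (φ i a + F + α i * a)
        ≤ -(fconj (φ i) (-c)) + F - (c - α i) * a - (c - α i)^2 * ‖x i‖^2 / (2 * lam * n) := by
      have e1 : -((c - α i) * a) = s * (u + α i) * a := by rw [hca]; ring
      linarith [hfc, hxx.trans_eq hxx', hco', e1]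
    have e2 : s / (n:ℝ) * (φ i a + F + α i * a) = 1/(n:ℝ) * (s * (φ i a + F + α i * a)) := by
      ring
    rw [e2]
    exact add_le_add_right (mul_le_mul_of_nonneg_left key
      (le_of_lt (one_div_pos.mpr hn'))) _


section TrajAux
variable {n : ℕ}

lemma traj_congr (step : (Fin n → ℝ) → Fin n → (Fin n → ℝ)) (α0 : Fin n → ℝ)
    (idx idx' : ℕ → Fin n) (t : ℕ) (h : ∀ k, k < t → idx k = idx' k) :
    traj step α0 idx t = traj step α0 idx' t := by
  induction t with
  | zero => rfl
  | succ t ih =>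
    have h1 : traj step α0 idx t = traj step α0 idx' t :=
      ih fun k hk => h k (Nat.lt_succ_of_lt hk)
    show step (traj step α0 idx t) (idx t) = step (traj step α0 idx' t) (idx' t)
    rw [h1, h t (Nat.lt_succ_self t)]

/-- The snoc equivalence. -/
def snocE (t m : ℕ) : ((Fin t → Fin m) × Fin m) ≃ (Fin (t + 1) → Fin m) where
  toFun p := Fin.snoc p.1 p.2
  invFun f := (Fin.init f, f (Fin.last t))
  left_inv p := by
    refine Prod.ext ?_ ?_ <;> simp
  right_inv f := Fin.snoc_init_self f

end TrajAux


section ExpAux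
variable {n : ℕ}

/-- Embedding of a finite index tuple as an infinite index sequence. -/
def embedIdx (hn : 0 < n) (t : ℕ) (v : Fin t → Fin n) : ℕ → Fin n :=
  fun k => if h : k < t then v ⟨k, h⟩ else ⟨0, hn⟩

lemma ExpIdx_eq (hn : 0 < n) (t : ℕ) (g : (ℕ → Fin n) → ℝ) :
    ExpIdx hn t g = (∑ v : Fin t → Fin n, g (embedIdx hn t v)) / (n : ℝ) ^ t := rfl

lemma traj_embed_snoc (hn : 0 < n) (step : (Fin n → ℝ) → Fin n → (Fin n → ℝ))
    (α0 : Fin n → ℝ) (t : ℕ) (v : Fin t → Fin n) (j : Fin n) :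
    traj step α0 (embedIdx hn (t+1) (Fin.snoc v j)) (t+1)
      = step (traj step α0 (embedIdx hn t v) t) j := by
  have h1 : embedIdx hn (t+1) (Fin.snoc v j) t = j := by
    rw [embedIdx, dif_pos (Nat.lt_succ_self t)]
    exact Fin.snoc_last (α := fun _ => Fin n) ..
  have h2 : traj step α0 (embedIdx hn (t+1) (Fin.snoc v j)) t
      = traj step α0 (embedIdx hn t v) t := by
    apply traj_congr
    intro k hk
    rw [embedIdx, embedIdx, dif_pos (Nat.lt_succ_of_lt hk), dif_pos hk]
    have e : (⟨k, Nat.lt_succ_of_lt hk⟩ : Fin (t+1)) = Fin.castSucc ⟨k, hk⟩ := rfl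
    rw [e]
    exact Fin.snoc_castSucc (α := fun _ => Fin n) ..
  show step (traj step α0 (embedIdx hn (t+1) (Fin.snoc v j)) t)
      (embedIdx hn (t+1) (Fin.snoc v j) t) = _
  rw [h1, h2]

lemma sum_traj_succ (hn : 0 < n) (step : (Fin n → ℝ) → Fin n → (Fin n → ℝ))
    (α0 : Fin n → ℝ) (F : (Fin n → ℝ) → ℝ) (t : ℕ) :
    (∑ v : Fin (t+1) → Fin n, F (traj step α0 (embedIdx hn (t+1) v) (t+1)))
      = ∑ v : Fin t → Fin n, ∑ j : Fin n,
          F (step (traj step α0 (embedIdx hn t v) t) j) := by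
  rw [← Equiv.sum_comp (snocE t n)
    (fun v => F (traj step α0 (embedIdx hn (t+1) v) (t+1))), Fintype.sum_prod_type]
  refine Finset.sum_congr rfl fun v _ => Finset.sum_congr rfl fun j _ => ?_
  have e : (snocE t n) (v, j) = Fin.snoc v j := rfl
  rw [e, traj_embed_snoc]

lemma traj_bound (hn : 0 < n) (step : (Fin n → ℝ) → Fin n → (Fin n → ℝ))
    (α0 : Fin n → ℝ) (E : (Fin n → ℝ) → ℝ) (Fe : (Fin n → ℝ) → Prop) (ρ : ℝ)
    (hρ : 0 ≤ ρ) (hFe0 : Fe α0) (hFstep : ∀ α i, Fe α → Fe (step α i))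
    (hcontr : ∀ α, Fe α → (∑ j, E (step α j)) ≤ ρ * E α) (t : ℕ) :
    (∑ v : Fin t → Fin n, E (traj step α0 (embedIdx hn t v) t)) ≤ ρ ^ t * E α0 := by
  have hfeas : ∀ (idx : ℕ → Fin n) (t : ℕ), Fe (traj step α0 idx t) := by
    intro idx t
    induction t with
    | zero => exact hFe0
    | succ t ih => exact hFstep _ _ ih
  induction t with
  | zero =>
    rw [Fintype.sum_unique (fun v : Fin 0 → Fin n => E (traj step α0 (embedIdx hn 0 v) 0))]
    simp [traj]
  | succ t ih =>
    rw [sum_traj_succ hn step α0 E t]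
    calc (∑ v : Fin t → Fin n, ∑ j : Fin n, E (step (traj step α0 (embedIdx hn t v) t) j))
        ≤ ∑ v : Fin t → Fin n, ρ * E (traj step α0 (embedIdx hn t v) t) :=
          Finset.sum_le_sum fun v _ => hcontr _ (hfeas _ t)
      _ = ρ * ∑ v : Fin t → Fin n, E (traj step α0 (embedIdx hn t v) t) := by
          rw [Finset.mul_sum]
      _ ≤ ρ * (ρ ^ t * E α0) := mul_le_mul_of_nonneg_left ih hρ
      _ = ρ ^ (t+1) * E α0 := by ring

end ExpAux

lemma final_arith {C εP : ℝ} (T : ℕ) (hC : 1 < C) (hε : 0 < εP)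
    (hT : C * Real.log (C / εP) ≤ T) : C * (1 - 1/C) ^ T ≤ εP := by
  have hC0 : (0:ℝ) < C := by linarith
  have h1 : (0:ℝ) ≤ 1 - 1/C := by
    have : 1/C ≤ 1 := by rw [div_le_one hC0]; linarith
    linarith
  have h2 : 1 - 1/C ≤ Real.exp (-(1/C)) := by
    have := Real.add_one_le_exp (-(1/C))
    linarith
  have h3 : (1 - 1/C) ^ T ≤ Real.exp (-(1/C)) ^ T := pow_le_pow_left₀ h1 h2 T
  have h4 : Real.exp (-(1/C)) ^ T = Real.exp (-((T:ℝ)/C)) := by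
    rw [← Real.exp_nat_mul]
    congr 1
    ring
  have h5 : Real.exp (-((T:ℝ)/C)) ≤ εP / C := by
    rw [← Real.exp_log (show (0:ℝ) < εP/C by positivity)]
    apply Real.exp_le_exp.mpr
    have hlog : Real.log (εP/C) = -Real.log (C/εP) := by
      rw [← Real.log_inv]
      congr 1
      rw [inv_div]
    rw [hlog]
    have hd : Real.log (C/εP) ≤ (T:ℝ)/C := by
      rw [le_div_iff₀ hC0]
      linarith [hT]
    linarith
  calc C * (1 - 1/C) ^ T ≤ C * (εP/C) :=
        mul_le_mul_of_nonneg_left ((h3.trans_eq h4).trans h5) (le_of_lt hC0)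
    _ = εP := by field_simp


/-- Theorem 2 (first part): SDCA convergence for `(1/γ)`-smooth convex losses,
started at `α⁰ = 0`. If `T ≥ (n + 1/(λγ)) log((n + 1/(λγ))/ε_P)`, then the
expected duality gap at time `T` is at most `ε_P`. -/
theorem sdca_smooth
    (n d : ℕ) (hn : 0 < n)
    (x : Fin n → EuclideanSpace ℝ (Fin d))
    (φ : Fin n → ℝ → ℝ) (hconv : ∀ i, ConvexOn ℝ Set.univ (φ i))
    (lam : ℝ) (hlam : 0 < lam)
    (γ : ℝ) (hγ : 0 < γ)
    (hdiff : ∀ i, Differentiable ℝ (φ i))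
    (hder : ∀ i, ∀ a b : ℝ, |deriv (φ i) a - deriv (φ i) b| ≤ (1 / γ) * |a - b|)
    (hx : ∀ i, ‖x i‖ ≤ 1) (hφ0 : ∀ i a, 0 ≤ φ i a) (hφ1 : ∀ i, φ i 0 ≤ 1)
    (step : (Fin n → ℝ) → Fin n → (Fin n → ℝ))
    (hstep_off : ∀ α i j, j ≠ i → step α i j = α j)
    (hstep_feas : ∀ α i, Feas φ α → Feas φ (step α i))
    (hstep_max : ∀ α i c, Feas φ (Function.update α i c) →
      dualObj lam x φ (Function.update α i c) ≤ dualObj lam x φ (step α i))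
    (εP : ℝ) (hεP : 0 < εP)
    (T : ℕ)
    (hT : ((n : ℝ) + 1 / (lam * γ)) * Real.log (((n : ℝ) + 1 / (lam * γ)) / εP) ≤ T) :
    ExpIdx hn T (fun idx =>
        primalObj lam x φ (wvec lam x (traj step (fun _ => 0) idx T))
          - dualObj lam x φ (traj step (fun _ => 0) idx T)) ≤ εP := by
  classical
  have hn' : (0:ℝ) < n := by exact_mod_cast hn
  have hn1 : (1:ℝ) ≤ n := by exact_mod_cast hn
  have hlg : 0 < lam * γ := mul_pos hlam hγ
  set C : ℝ := (n : ℝ) + 1 / (lam * γ) with hCdef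
  have hinvlg : 0 < 1 / (lam * γ) := by positivity
  have hC1 : 1 < C := by rw [hCdef]; linarith
  have hC0 : 0 < C := by linarith
  -- feasibility of 0
  have feas0 : Feas φ (fun _ => 0) := by
    intro i
    apply finiteConj_of_bound (B := 0)
    intro z
    have h := hφ0 i z
    simp only [neg_zero, mul_zero]
    linarith
  -- the dual optimum
  have hP0 : primalObj lam x φ 0 ≤ 1 := by
    rw [primalObj]
    have hz : ∀ i : Fin n, ⟪x i, (0 : EuclideanSpace ℝ (Fin d))⟫ = (0:ℝ) :=
      fun i => inner_zero_right (x i)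
    have hsum : (∑ i, φ i ⟪x i, (0 : EuclideanSpace ℝ (Fin d))⟫) ≤ (n:ℝ) := by
      calc (∑ i, φ i ⟪x i, (0 : EuclideanSpace ℝ (Fin d))⟫) ≤ ∑ _i : Fin n, (1:ℝ) :=
            Finset.sum_le_sum fun i _ => by rw [hz i]; exact hφ1 i
        _ = (n:ℝ) := by simp
    have h2 : (1/(n:ℝ)) * (∑ i, φ i ⟪x i, (0 : EuclideanSpace ℝ (Fin d))⟫) ≤ 1 := by
      have := mul_le_mul_of_nonneg_left hsum (le_of_lt (one_div_pos.mpr hn'))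
      rw [one_div_mul_cancel (ne_of_gt hn')] at this
      exact this
    simp only [norm_zero]
    nlinarith
  have hub : ∀ y ∈ dualObj lam x φ '' {α | Feas φ α}, y ≤ 1 := by
    rintro y ⟨α, hα, rfl⟩
    exact (weak_duality x lam φ hn hlam α hα 0).trans hP0
  have hbdd : BddAbove (dualObj lam x φ '' {α | Feas φ α}) := ⟨1, fun y hy => hub y hy⟩
  have hne : (dualObj lam x φ '' {α | Feas φ α}).Nonempty := ⟨_, ⟨fun _ => 0, feas0, rfl⟩⟩
  set Dstar : ℝ := sSup (dualObj lam x φ '' {α | Feas φ α}) with hDstardef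
  have hDle : ∀ α, Feas φ α → dualObj lam x φ α ≤ Dstar :=
    fun α hα => le_csSup hbdd ⟨α, hα, rfl⟩
  have hDstar_le : ∀ w, Dstar ≤ primalObj lam x φ w := fun w =>
    csSup_le hne (by rintro y ⟨α, hα, rfl⟩; exact weak_duality x lam φ hn hlam α hα w)
  have hDstar1 : Dstar ≤ 1 := (hDstar_le 0).trans hP0
  have hD0 : 0 ≤ dualObj lam x φ (fun _ => 0) := by
    rw [dualObj]
    have hw0 : wvec lam x (fun _ => 0) = 0 := by
      rw [wvec]
      simp
    have hterm : ∀ i : Fin n, (0:ℝ) ≤ -(fconj (φ i) (-(0:ℝ))) := by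
      intro i
      have : fconj (φ i) (-(0:ℝ)) ≤ 0 := by
        apply fconj_le
        intro z
        have := hφ0 i z
        simp only [neg_zero, mul_zero]
        linarith
      linarith
    have hsum : (0:ℝ) ≤ ∑ i, -(fconj (φ i) (-(0:ℝ))) :=
      Finset.sum_nonneg fun i _ => hterm i
    rw [hw0]
    simp only [norm_zero]
    have : (0:ℝ) ≤ 1/(n:ℝ) * ∑ i, -(fconj (φ i) (-(0:ℝ))) := by positivity
    nlinarith
  -- the key per-step inequality
  have hκ : lam * γ / (1 + lam * γ * n) = 1 / C := by
    rw [hCdef]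
    field_simp
    ring
  have key : ∀ α, Feas φ α →
      (n:ℝ) * dualObj lam x φ α + ((n:ℝ)/C) *
          (primalObj lam x φ (wvec lam x α) - dualObj lam x φ α)
        ≤ ∑ j, dualObj lam x φ (step α j) := by
    intro α hα
    have hj : ∀ j : Fin n, dualObj lam x φ α + (1/C) *
        (φ j ⟪x j, wvec lam x α⟫ + fconj (φ j) (-(α j)) + α j * ⟪x j, wvec lam x α⟫)
          ≤ dualObj lam x φ (step α j) := by
      intro j
      obtain ⟨c, hcf, hineq⟩ :=
        coord_improve x lam γ φ hn hlam hγ hconv hdiff hder hx α hα j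
      rw [hκ] at hineq
      exact hineq.trans (hstep_max α j c hcf)
    have hsum := Finset.sum_le_sum fun j (_ : j ∈ Finset.univ) => hj j
    have hgap := gap_formula x lam φ hn hlam α
    have hgsum : (∑ j, (φ j ⟪x j, wvec lam x α⟫ + fconj (φ j) (-(α j))
        + α j * ⟪x j, wvec lam x α⟫))
        = (n:ℝ) * (primalObj lam x φ (wvec lam x α) - dualObj lam x φ α) := by
      rw [← hgap]
      field_simp
    calc (n:ℝ) * dualObj lam x φ α + ((n:ℝ)/C) *
          (primalObj lam x φ (wvec lam x α) - dualObj lam x φ α)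
        = ∑ j : Fin n, (dualObj lam x φ α + (1/C) *
            (φ j ⟪x j, wvec lam x α⟫ + fconj (φ j) (-(α j))
              + α j * ⟪x j, wvec lam x α⟫)) := by
          rw [Finset.sum_add_distrib, Finset.sum_const, ← Finset.mul_sum, hgsum,
            Finset.card_univ, Fintype.card_fin, nsmul_eq_mul]
          ring
      _ ≤ ∑ j, dualObj lam x φ (step α j) := hsum
  -- gap bound and contraction
  have G1 : ∀ α, Feas φ α →
      primalObj lam x φ (wvec lam x α) - dualObj lam x φ α
        ≤ C * (Dstar - dualObj lam x φ α) := by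
    intro α hα
    have h1 : (∑ j, dualObj lam x φ (step α j)) ≤ (n:ℝ) * Dstar := by
      calc (∑ j, dualObj lam x φ (step α j)) ≤ ∑ _j : Fin n, Dstar :=
            Finset.sum_le_sum fun j _ => hDle _ (hstep_feas α j hα)
        _ = (n:ℝ) * Dstar := by
            rw [Finset.sum_const, Finset.card_univ, Fintype.card_fin, nsmul_eq_mul]
    have h2 := (key α hα).trans h1
    have h3 := mul_le_mul_of_nonneg_left
      (by linarith : ((n:ℝ)/C) * (primalObj lam x φ (wvec lam x α) - dualObj lam x φ α)
          ≤ (n:ℝ) * (Dstar - dualObj lam x φ α))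
      (le_of_lt (div_pos hC0 hn'))
    have e1 : (C/(n:ℝ)) * (((n:ℝ)/C) *
        (primalObj lam x φ (wvec lam x α) - dualObj lam x φ α))
        = primalObj lam x φ (wvec lam x α) - dualObj lam x φ α := by
      field_simp
    have e2 : (C/(n:ℝ)) * ((n:ℝ) * (Dstar - dualObj lam x φ α))
        = C * (Dstar - dualObj lam x φ α) := by
      field_simp
    rw [e1, e2] at h3
    exact h3
  have G2 : ∀ α, Feas φ α →
      (∑ j, (Dstar - dualObj lam x φ (step α j)))
        ≤ ((n:ℝ) - (n:ℝ)/C) * (Dstar - dualObj lam x φ α) := by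
    intro α hα
    have h1 := key α hα
    have h2 : Dstar ≤ primalObj lam x φ (wvec lam x α) := hDstar_le _
    have h3 : (∑ j, (Dstar - dualObj lam x φ (step α j)))
        = (n:ℝ) * Dstar - ∑ j, dualObj lam x φ (step α j) := by
      rw [Finset.sum_sub_distrib, Finset.sum_const, Finset.card_univ, Fintype.card_fin,
        nsmul_eq_mul]
    have h4 : ((n:ℝ)/C) * (Dstar - dualObj lam x φ α)
        ≤ ((n:ℝ)/C) * (primalObj lam x φ (wvec lam x α) - dualObj lam x φ α) := by
      apply mul_le_mul_of_nonneg_left (by linarith) (le_of_lt (div_pos hn' hC0))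
    rw [h3]
    nlinarith [h1, h4]
  -- the contraction along the trajectory
  set ρ : ℝ := (n:ℝ) - (n:ℝ)/C with hρdef
  have hρ0 : 0 ≤ ρ := by
    rw [hρdef]
    have : (n:ℝ)/C ≤ (n:ℝ) := by
      rw [div_le_iff₀ hC0]
      nlinarith
    linarith
  have hbound := traj_bound hn step (fun _ => 0)
    (fun α => Dstar - dualObj lam x φ α) (Feas φ) ρ hρ0 feas0 hstep_feas
    (fun α hα => G2 α hα) T
  have hE0 : Dstar - dualObj lam x φ (fun _ => 0) ≤ 1 := by linarith
  have hfeasAll : ∀ (idx : ℕ → Fin n) (t : ℕ), Feas φ (traj step (fun _ => 0) idx t) := by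
    intro idx t
    induction t with
    | zero => exact feas0
    | succ t ih => exact hstep_feas _ _ ih
  have hfeasT : ∀ v : Fin T → Fin n,
      Feas φ (traj step (fun _ => 0) (embedIdx hn T v) T) := fun v => hfeasAll _ T
  -- final assembly
  rw [show (fun idx => primalObj lam x φ (wvec lam x (traj step (fun _ => 0) idx T))
      - dualObj lam x φ (traj step (fun _ => 0) idx T)) =
      (fun idx => primalObj lam x φ (wvec lam x (traj step (fun _ => 0) idx T))
      - dualObj lam x φ (traj step (fun _ => 0) idx T)) from rfl]
  rw [ExpIdx_eq hn T]
  have hnum : (∑ v : Fin T → Fin n,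
      (primalObj lam x φ (wvec lam x (traj step (fun _ => 0) (embedIdx hn T v) T))
        - dualObj lam x φ (traj step (fun _ => 0) (embedIdx hn T v) T)))
      ≤ C * ρ ^ T := by
    calc (∑ v : Fin T → Fin n,
        (primalObj lam x φ (wvec lam x (traj step (fun _ => 0) (embedIdx hn T v) T))
          - dualObj lam x φ (traj step (fun _ => 0) (embedIdx hn T v) T)))
        ≤ ∑ v : Fin T → Fin n,
            C * (Dstar - dualObj lam x φ (traj step (fun _ => 0) (embedIdx hn T v) T)) :=
          Finset.sum_le_sum fun v _ => G1 _ (hfeasT v)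
      _ = C * ∑ v : Fin T → Fin n,
            (Dstar - dualObj lam x φ (traj step (fun _ => 0) (embedIdx hn T v) T)) := by
          rw [Finset.mul_sum]
      _ ≤ C * (ρ ^ T * (Dstar - dualObj lam x φ (fun _ => 0))) :=
          mul_le_mul_of_nonneg_left hbound (le_of_lt hC0)
      _ ≤ C * ρ ^ T := by
          nlinarith [pow_nonneg hρ0 T, hE0, mul_le_mul_of_nonneg_left hE0
            (mul_nonneg (le_of_lt hC0) (pow_nonneg hρ0 T))]
  have hpow : (0:ℝ) < (n:ℝ) ^ T := by positivity
  have hfinal : C * ρ ^ T / (n:ℝ) ^ T ≤ εP := by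
    have e1 : C * ρ ^ T / (n:ℝ) ^ T = C * (ρ / n) ^ T := by
      rw [div_pow]
      ring
    have e2 : ρ / (n:ℝ) = 1 - 1/C := by
      rw [hρdef]
      field_simp
    rw [e1, e2]
    exact final_arith T hC1 hεP (by rw [hCdef] at hT ⊢; exact hT)
  calc (∑ v : Fin T → Fin n,
      (primalObj lam x φ (wvec lam x (traj step (fun _ => 0) (embedIdx hn T v) T))
        - dualObj lam x φ (traj step (fun _ => 0) (embedIdx hn T v) T))) / (n:ℝ) ^ T
      ≤ C * ρ ^ T / (n:ℝ) ^ T := (div_le_div_iff_of_pos_right hpow).mpr hnum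
    _ ≤ εP := hfinal
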